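/- arXiv:1605.08794 — 2 statements merged into one kernel-verified Lean document; each statement's English description precedes it below -/
import Mathlib

section
/- Let F : P(X) → [0,∞] be a linear functional of the form F(μ) = ∫ f dμ for a lower semicontinuous function f : X → [0,∞] on a compact metric space X. Then the set of finite convex combinations of Dirac masses is F-dense in P(X): for every μ ∈ P(X) there exist μ_n, each a finite convex combination of Dirac masses, with μ_n → μ weakly and limsup_n F(μ_n) ≤ F(μ). -/
open Filter MeasureTheory BoundedContinuousFunction Set
open scoped ENNReal Topology

/-- In `ℝ≥0∞`, a nonempty set admits a point whose value is within `ε` of the infimum. -/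
lemma exists_near_inf {X : Type*} (f : X → ℝ≥0∞) {s : Set X} (hs : s.Nonempty)
    {ε : ℝ≥0∞} (hε : ε ≠ 0) : ∃ x ∈ s, f x ≤ (⨅ y ∈ s, f y) + ε := by
  by_cases h : (⨅ y ∈ s, f y) = ⊤
  · exact ⟨hs.choose, hs.choose_spec, by simp [h]⟩
  · have : (⨅ y ∈ s, f y) < (⨅ y ∈ s, f y) + ε := ENNReal.lt_add_right h hε
    obtain ⟨x, hx⟩ := iInf_lt_iff.mp this
    obtain ⟨hxs, hfx⟩ := iInf_lt_iff.mp hx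
    exact ⟨x, hxs, hfx.le⟩

lemma approx_step {X : Type*} [MetricSpace X] [CompactSpace X] [MeasurableSpace X] [BorelSpace X]
    (f : X → ℝ≥0∞) (hfm : Measurable f) (μ : Measure X) [IsProbabilityMeasure μ]
    {r : ℝ} (hr : 0 < r) {ε : ℝ≥0∞} (hε : ε ≠ 0) :
    ∃ (k : ℕ) (w : Fin k → ℝ≥0∞) (pts : Fin k → X),
      (∑ i, w i) = 1 ∧
      (∀ φ : X →ᵇ ℝ, ∀ δ : ℝ, 0 ≤ δ → (∀ x y : X, dist x y < 2*r → |φ x - φ y| ≤ δ) →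
        |(∫ x, φ x ∂(∑ i, w i • Measure.dirac (pts i))) - ∫ x, φ x ∂μ| ≤ δ) ∧
      (∫⁻ x, f x ∂(∑ i, w i • Measure.dirac (pts i))) ≤ (∫⁻ x, f x ∂μ) + ε := by
  -- X is nonempty
  haveI : IsFiniteMeasure μ := inferInstance
  have hXne : Nonempty X := by
    by_contra h
    rw [not_nonempty_iff] at h
    have h0 : μ univ = 0 := by rw [Set.univ_eq_empty_iff.mpr h]; exact measure_empty
    rw [measure_univ] at h0
    exact one_ne_zero h0
  -- finite cover by balls of radius r
  obtain ⟨t, -, htfin, htcover⟩ := finite_cover_balls_of_compact (isCompact_univ (X := X)) hr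
  haveI := htfin.fintype
  set k : ℕ := htfin.toFinset.card with hk
  obtain ⟨c', hc'⟩ : ∃ c' : Fin k → X, ∀ x ∈ t, ∃ i, c' i = x := by
    have e := htfin.toFinset.equivFin
    refine ⟨fun i => (e.symm i : X), fun x hx => ?_⟩
    refine ⟨e ⟨x, htfin.mem_toFinset.mpr hx⟩, by simp⟩
  -- ℕ-indexed balls, then disjointify
  set B : ℕ → Set X := fun j => if h : j < k then Metric.ball (c' ⟨j, h⟩) r else ∅ with hB
  have hBmeas : ∀ j, MeasurableSet (B j) := by
    intro j; rw [hB]; dsimp only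
    split
    · exact Metric.isOpen_ball.measurableSet
    · exact MeasurableSet.empty
  set E : Fin k → Set X := fun i => disjointed B i with hE
  have hEmeas : ∀ i, MeasurableSet (E i) := fun i => MeasurableSet.disjointed hBmeas i
  have hEdisj : Pairwise (Function.onFun Disjoint fun j : ℕ => disjointed B j) := disjoint_disjointed B
  have hEball : ∀ i : Fin k, E i ⊆ Metric.ball (c' i) r := by
    intro i
    refine (disjointed_subset B i).trans ?_
    rw [hB]; simp only [Fin.is_lt, dif_pos]
    exact subset_of_eq (by congr)
  have hEempty : ∀ j : ℕ, k ≤ j → disjointed B j = ∅ := by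
    intro j hj
    refine eq_empty_of_subset_empty ((disjointed_subset B j).trans ?_)
    rw [hB]; simp [Nat.not_lt.mpr hj]
  have hEunion : ⋃ j, disjointed B j = univ := by
    rw [iUnion_disjointed]
    apply eq_univ_of_univ_subset
    refine htcover.trans ?_
    intro x hx
    simp only [mem_iUnion] at hx ⊢
    obtain ⟨y, hy, hxy⟩ := hx
    obtain ⟨i, rfl⟩ := hc' y hy
    exact ⟨i, by rw [hB]; simp only [Fin.is_lt, dif_pos, Fin.eta]; exact hxy⟩
  -- weights and points
  set w : Fin k → ℝ≥0∞ := fun i => μ (E i) with hw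
  classical
  have hpts : ∀ i : Fin k, ∃ x : X, ((E i).Nonempty → x ∈ E i ∧ f x ≤ (⨅ y ∈ E i, f y) + ε) := by
    intro i
    by_cases h : (E i).Nonempty
    · obtain ⟨x, hx1, hx2⟩ := exists_near_inf f h hε
      exact ⟨x, fun _ => ⟨hx1, hx2⟩⟩
    · exact ⟨Classical.arbitrary X, fun h' => absurd h' h⟩
  choose pts hpts using hpts
  refine ⟨k, w, pts, ?_, ?_, ?_⟩
  · -- sum of weights is 1
    have : ∑ i : Fin k, μ (E i) = ∑' j : ℕ, μ (disjointed B j) := by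
      rw [Fin.sum_univ_eq_sum_range (fun j => μ (disjointed B j)) k]
      · exact (tsum_eq_sum (fun j hj => by
          rw [hEempty j (Finset.mem_range.not.mp hj |> Nat.not_lt.mp), measure_empty])).symm
    rw [hw, this, ← measure_iUnion hEdisj (fun j => MeasurableSet.disjointed hBmeas j), hEunion,
      measure_univ]
  · -- weak estimate
    intro φ δ hδ hφ
    have hφint : Integrable (fun x => φ x) μ := φ.integrable μ
    have hint : ∀ i ∈ Finset.univ (α := Fin k), Integrable (fun x => φ x) (w i • Measure.dirac (pts i)) := by
      intro i _
      haveI : IsFiniteMeasure (w i • Measure.dirac (pts i)) := by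
        constructor
        rw [Measure.smul_apply, measure_univ, smul_eq_mul, mul_one, hw]
        exact measure_lt_top μ (E i)
      exact φ.integrable _
    rw [integral_finset_sum_measure hint]
    have hμint : ∀ i ∈ Finset.univ (α := Fin k), IntegrableOn (fun x => φ x) (E i) μ := by
      intro i _
      exact hφint.integrableOn
    have hsplit : ∫ x, φ x ∂μ = ∑ i : Fin k, ∫ x in E i, φ x ∂μ := by
      have h1 : (⋃ i ∈ Finset.univ (α := Fin k), E i) = univ := by
        apply eq_univ_of_univ_subset
        rw [← hEunion]
        intro x hx
        simp only [mem_iUnion] at hx ⊢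
        obtain ⟨j, hj⟩ := hx
        have hjk : j < k := by
          by_contra h
          rw [hEempty j (Nat.not_lt.mp h)] at hj
          exact hj
        exact ⟨⟨j, hjk⟩, Finset.mem_univ _, hj⟩
      rw [← integral_biUnion_finset Finset.univ (fun i _ => hEmeas i)
        (fun i _ j _ hij => hEdisj (by simpa using Fin.val_injective.ne hij)) hμint, h1,
        Measure.restrict_univ]
    rw [hsplit, ← Finset.sum_sub_distrib]
    refine (Finset.abs_sum_le_sum_abs _ _).trans ?_
    have hterm : ∀ i : Fin k,
        |(∫ x, φ x ∂(w i • Measure.dirac (pts i))) - ∫ x in E i, φ x ∂μ| ≤ δ * (μ (E i)).toReal := by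
      intro i
      rw [integral_smul_measure, integral_dirac]
      by_cases hne : (E i).Nonempty
      · have hpt := hpts i hne
        have : (w i).toReal • φ (pts i) = ∫ x in E i, φ (pts i) ∂μ := by
          rw [setIntegral_const]; rfl
        have hconst : IntegrableOn (fun _ => φ (pts i)) (E i) μ :=
          integrableOn_const (measure_lt_top μ (E i)).ne
        rw [this, ← integral_sub hconst (hμint i (Finset.mem_univ i))]
        have hae : ∀ᵐ x ∂μ.restrict (E i), ‖φ (pts i) - φ x‖ ≤ δ := by
          rw [ae_restrict_iff' (hEmeas i)]
          filter_upwards with x hx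
          rw [Real.norm_eq_abs]
          refine hφ _ _ ?_
          calc dist (pts i) x ≤ dist (pts i) (c' i) + dist (c' i) x := dist_triangle _ _ _
            _ < r + r := by
                refine add_lt_add ?_ ?_
                · exact Metric.mem_ball.mp (hEball i hpt.1)
                · exact Metric.mem_ball'.mp (hEball i hx)
            _ = 2 * r := by ring
        have hnorm := norm_integral_le_of_norm_le_const (μ := μ.restrict (E i)) hae
        rw [measureReal_restrict_apply_univ] at hnorm
        simpa [Real.norm_eq_abs, measureReal_def] using hnorm
      · rw [not_nonempty_iff_eq_empty] at hne
        have hw0 : w i = 0 := by rw [hw]; simp [hne]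
        rw [hw0, hne]
        simp [hδ]
    refine (Finset.sum_le_sum fun i _ => hterm i).trans ?_
    rw [← Finset.mul_sum]
    have : ∑ i : Fin k, (μ (E i)).toReal = 1 := by
      have h1 : ∑ i : Fin k, μ (E i) = 1 := by
        have : ∑ i : Fin k, μ (E i) = ∑' j : ℕ, μ (disjointed B j) := by
          rw [Fin.sum_univ_eq_sum_range (fun j => μ (disjointed B j)) k]
          exact (tsum_eq_sum (fun j hj => by
            rw [hEempty j (Finset.mem_range.not.mp hj |> Nat.not_lt.mp), measure_empty])).symm
        rw [this, ← measure_iUnion hEdisj (fun j => MeasurableSet.disjointed hBmeas j), hEunion,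
          measure_univ]
      rw [← ENNReal.toReal_sum (fun i _ => (measure_lt_top μ _).ne), h1, ENNReal.toReal_one]
    rw [this, mul_one]
  · -- lintegral estimate
    rw [lintegral_finset_sum_measure]
    have hterm : ∀ i : Fin k,
        ∫⁻ x, f x ∂(w i • Measure.dirac (pts i)) ≤ (∫⁻ x in E i, f x ∂μ) + ε * w i := by
      intro i
      rw [lintegral_smul_measure, lintegral_dirac]
      by_cases hne : (E i).Nonempty
      · obtain ⟨hmem, hfle⟩ := hpts i hne
        calc w i * f (pts i) ≤ w i * ((⨅ y ∈ E i, f y) + ε) := by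
              exact mul_le_mul_right hfle _
          _ = w i * (⨅ y ∈ E i, f y) + ε * w i := by ring
          _ ≤ (∫⁻ x in E i, f x ∂μ) + ε * w i := by
              gcongr
              calc w i * (⨅ y ∈ E i, f y) = ∫⁻ _ in E i, (⨅ y ∈ E i, f y) ∂μ := by
                    rw [setLIntegral_const, mul_comm]
                _ ≤ ∫⁻ x in E i, f x ∂μ := by
                    refine setLIntegral_mono hfm fun x hx => ?_
                    exact biInf_le f hx
      · rw [not_nonempty_iff_eq_empty] at hne
        have hw0 : w i = 0 := by rw [hw]; simp [hne]
        simp [hw0]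
    refine (Finset.sum_le_sum fun i _ => hterm i).trans ?_
    rw [Finset.sum_add_distrib, ← Finset.mul_sum]
    have hsum1 : ∑ i : Fin k, w i = 1 := by
      rw [hw]
      have : ∑ i : Fin k, μ (E i) = ∑' j : ℕ, μ (disjointed B j) := by
        rw [Fin.sum_univ_eq_sum_range (fun j => μ (disjointed B j)) k]
        exact (tsum_eq_sum (fun j hj => by
          rw [hEempty j (Finset.mem_range.not.mp hj |> Nat.not_lt.mp), measure_empty])).symm
      rw [this, ← measure_iUnion hEdisj (fun j => MeasurableSet.disjointed hBmeas j), hEunion,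
        measure_univ]
    rw [hsum1, mul_one]
    gcongr
    have : ∑ i : Fin k, ∫⁻ x in E i, f x ∂μ = ∑' j : ℕ, ∫⁻ x in disjointed B j, f x ∂μ := by
      rw [Fin.sum_univ_eq_sum_range (fun j => ∫⁻ x in disjointed B j, f x ∂μ) k]
      exact (tsum_eq_sum (fun j hj => by
        rw [hEempty j (Finset.mem_range.not.mp hj |> Nat.not_lt.mp)]
        simp)).symm
    rw [this, ← lintegral_iUnion (fun j => MeasurableSet.disjointed hBmeas j) hEdisj f, hEunion,
      Measure.restrict_univ]

/-- Finite convex combinations of Dirac masses are `F`-dense in `P(X)` for the linear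
functional `F(μ) = ∫ f dμ` with `f : X → [0,∞]` lower semicontinuous and `X` a compact
metric space: every probability measure `μ` is the weak limit of finite convex
combinations `μ n` of Dirac masses with `limsup_n ∫ f dμ_n ≤ ∫ f dμ`. -/
theorem stmt13 {X : Type*} [MetricSpace X] [CompactSpace X] [MeasurableSpace X] [BorelSpace X]
    (f : X → ℝ≥0∞) (hf : LowerSemicontinuous f)
    (μ : Measure X) [IsProbabilityMeasure μ] :
    ∃ μs : ℕ → Measure X,
      (∀ n, ∃ (k : ℕ) (w : Fin k → ℝ≥0∞) (pts : Fin k → X),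
        (∑ i, w i) = 1 ∧ μs n = ∑ i, w i • Measure.dirac (pts i)) ∧
      (∀ φ : X →ᵇ ℝ, Tendsto (fun n => ∫ x, φ x ∂(μs n)) atTop (𝓝 (∫ x, φ x ∂μ))) ∧
      limsup (fun n => ∫⁻ x, f x ∂(μs n)) atTop ≤ ∫⁻ x, f x ∂μ := by
  have hfm : Measurable f := hf.measurable
  have key := fun n : ℕ => approx_step f hfm μ
    (r := 1/(n+1:ℝ)) (by positivity)
    (ε := ((n:ℝ≥0∞)+1)⁻¹) (by simp)
  choose k w pts hsum hweak hlint using key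
  refine ⟨fun n => ∑ i, w n i • Measure.dirac (pts n i),
    fun n => ⟨k n, w n, pts n, hsum n, rfl⟩, ?_, ?_⟩
  · intro φ
    rw [Metric.tendsto_atTop]
    intro ε hε
    have hu : UniformContinuous (φ : X → ℝ) :=
      CompactSpace.uniformContinuous_of_continuous φ.continuous
    obtain ⟨δ, hδpos, hδ⟩ := Metric.uniformContinuous_iff.mp hu (ε/2) (by linarith)
    obtain ⟨N, hN⟩ := exists_nat_gt (2/δ)
    refine ⟨N, fun n hn => ?_⟩
    have hn1 : (0:ℝ) < n + 1 := by positivity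
    have h2r : 2 * (1/(n+1:ℝ)) < δ := by
      rw [mul_one_div, div_lt_iff₀ hn1]
      have h1 : (2:ℝ)/δ < N := hN
      have h2 : (N:ℝ) ≤ n := Nat.cast_le.mpr hn
      have h3 : (2:ℝ)/δ < n + 1 := by linarith
      calc (2:ℝ) = (2/δ) * δ := by field_simp
        _ < (n+1) * δ := by
            exact mul_lt_mul_of_pos_right h3 hδpos
        _ = δ * (n+1) := by ring
    have hb := hweak n φ (ε/2) (by linarith) (fun x y hxy => by
      have := hδ (lt_trans hxy h2r)
      rw [Real.dist_eq] at this
      exact this.le)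
    rw [Real.dist_eq]
    calc |(∫ x, φ x ∂(∑ i, w n i • Measure.dirac (pts n i))) - ∫ x, φ x ∂μ| ≤ ε/2 := hb
      _ < ε := by linarith
  · have h0 : Tendsto (fun n : ℕ => ((n:ℝ≥0∞)+1)⁻¹) atTop (𝓝 0) := by
      have h := ENNReal.tendsto_inv_nat_nhds_zero.comp (tendsto_add_atTop_nat 1)
      refine h.congr fun n => ?_
      simp [Function.comp, Nat.cast_add, Nat.cast_one]
    have hlim : Tendsto (fun n : ℕ => (∫⁻ x, f x ∂μ) + ((n:ℝ≥0∞)+1)⁻¹) atTop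
        (𝓝 ((∫⁻ x, f x ∂μ) + 0)) := Tendsto.const_add _ h0
    rw [add_zero] at hlim
    calc limsup (fun n => ∫⁻ x, f x ∂(∑ i, w n i • Measure.dirac (pts n i))) atTop
        ≤ limsup (fun n : ℕ => (∫⁻ x, f x ∂μ) + ((n:ℝ≥0∞)+1)⁻¹) atTop :=
          limsup_le_limsup (Eventually.of_forall fun n => hlint n)
      _ = ∫⁻ x, f x ∂μ := hlim.limsup_eq
end

section
/- Let f : ℝ^d → ℝ be continuous and bounded, U as above (continuous, nonnegative, vanishing only at x̄, growing at infinity), and μ_β(dx) = C_β^{-1} e^{-2βU(x)}dx. Then lim_{β→∞} ∫ f dμ_β = f(x̄). -/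
open Real Filter MeasureTheory
open scoped Topology

/-- First-order Laplace asymptotics: if `U ≥ 0` is continuous, vanishes exactly at `x̄`,
stays bounded away from `0` at infinity and `e^{-2β₀U}` is integrable for some `β₀ > 0`,
then for every bounded continuous `f`,
`∫ f dμ_β = (∫ f e^{-2βU} dx)/(∫ e^{-2βU} dx) → f(x̄)` as `β → ∞`. -/
theorem stmt17 {d : ℕ} (xbar : EuclideanSpace ℝ (Fin d))
    (U : EuclideanSpace ℝ (Fin d) → ℝ) (hUc : Continuous U) (hU0 : ∀ x, 0 ≤ U x)
    (hzero : ∀ x, U x = 0 ↔ x = xbar)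
    (hinfty : ∃ c > (0 : ℝ), ∃ R : ℝ, ∀ x, R ≤ ‖x‖ → c ≤ U x)
    (hint : ∃ β₀ > (0 : ℝ), Integrable (fun x => exp (-(2 * β₀ * U x))) volume)
    (f : EuclideanSpace ℝ (Fin d) → ℝ) (hfc : Continuous f) (hfb : ∃ M : ℝ, ∀ x, |f x| ≤ M) :
    Tendsto (fun b : ℝ =>
        (∫ x, f x * exp (-(2 * b * U x))) / ∫ x, exp (-(2 * b * U x)))
      atTop (𝓝 (f xbar)) := by
  obtain ⟨c, hc, R, hR⟩ := hinfty
  obtain ⟨β₀, hβ₀, hintU⟩ := hint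
  obtain ⟨M, hM⟩ := hfb
  have hM0 : 0 ≤ M := le_trans (abs_nonneg _) (hM xbar)
  -- integrability of the exponential weight for all b ≥ β₀
  have hint_b : ∀ b : ℝ, β₀ ≤ b → Integrable (fun x => exp (-(2 * b * U x))) volume := by
    intro b hb
    refine hintU.mono' ?_ (Filter.Eventually.of_forall fun x => ?_)
    · exact (Real.continuous_exp.comp (by continuity)).aestronglyMeasurable
    · rw [Real.norm_eq_abs, abs_of_pos (Real.exp_pos _)]
      exact Real.exp_le_exp.2 (by nlinarith [hU0 x])
  have hint_fb : ∀ b : ℝ, β₀ ≤ b →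
      Integrable (fun x => f x * exp (-(2 * b * U x))) volume := by
    intro b hb
    exact (hint_b b hb).bdd_mul hfc.aestronglyMeasurable (Filter.Eventually.of_forall fun x => by
      rw [Real.norm_eq_abs]; exact hM x)
  rw [Metric.tendsto_atTop]
  intro ε hε
  -- continuity of f at xbar
  obtain ⟨δ, hδ, hfδ⟩ := Metric.continuousAt_iff.1 hfc.continuousAt (ε/4) (by positivity)
  -- uniform lower bound for U away from xbar
  obtain ⟨c₂, hc₂, hc₂U⟩ : ∃ c₂ > (0:ℝ), ∀ x, δ ≤ dist x xbar → c₂ ≤ U x := by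
    set K := Metric.closedBall (0 : EuclideanSpace ℝ (Fin d)) R \ Metric.ball xbar δ with hKdef
    rcases K.eq_empty_or_nonempty with hK | hK
    · refine ⟨c, hc, fun x hx => ?_⟩
      by_cases h : R ≤ ‖x‖
      · exact hR x h
      · exfalso
        refine Set.eq_empty_iff_forall_notMem.1 hK x ⟨?_, ?_⟩
        · simpa [Metric.mem_closedBall, dist_zero_right] using (le_of_not_ge h)
        · simp [Metric.mem_ball, not_lt, hx]
    · have hKc : IsCompact K := (isCompact_closedBall _ _).diff Metric.isOpen_ball
      obtain ⟨x₀, hx₀K, hx₀⟩ := hKc.exists_isMinOn hK hUc.continuousOn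
      have hx₀pos : 0 < U x₀ := by
        rcases (hU0 x₀).lt_or_eq with h | h
        · exact h
        · exfalso
          have hx0 : x₀ = xbar := (hzero x₀).1 h.symm
          have := hx₀K.2
          rw [hx0] at this
          exact this (Metric.mem_ball_self hδ)
      refine ⟨min c (U x₀), lt_min hc hx₀pos, fun x hx => ?_⟩
      by_cases h : R ≤ ‖x‖
      · exact le_trans (min_le_left _ _) (hR x h)
      · refine le_trans (min_le_right _ _) (hx₀ ⟨?_, ?_⟩)
        · simpa [Metric.mem_closedBall, dist_zero_right] using (le_of_not_ge h)
        · simp [Metric.mem_ball, not_lt, hx]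
  -- a small ball around xbar where U ≤ c₂ / 2
  have hUxbar : U xbar = 0 := (hzero xbar).2 rfl
  obtain ⟨δ', hδ', hUδ'⟩ := Metric.continuousAt_iff.1 hUc.continuousAt (c₂/2) (by positivity)
  have hUsmall : ∀ x ∈ Metric.ball xbar δ', U x ≤ c₂ / 2 := by
    intro x hx
    have := hUδ' (Metric.mem_ball.1 hx)
    rw [hUxbar, Real.dist_eq, sub_zero] at this
    exact le_of_lt (lt_of_abs_lt this)
  set V : ℝ := (volume (Metric.ball xbar δ')).toReal with hVdef
  have hV : 0 < V := ENNReal.toReal_pos (Metric.measure_ball_pos volume xbar hδ').ne'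
    measure_ball_lt_top.ne
  set K₀ : ℝ := ∫ x, exp (-(2 * β₀ * U x)) with hK₀def
  have hK₀ : 0 ≤ K₀ := integral_nonneg fun x => (Real.exp_pos _).le
  -- lower bound on the denominator
  have Dlb : ∀ b : ℝ, β₀ ≤ b →
      Real.exp (-(b * c₂)) * V ≤ ∫ x, exp (-(2 * b * U x)) := by
    intro b hb
    have hb0 : 0 < b := lt_of_lt_of_le hβ₀ hb
    have h1 : (∫ _x in Metric.ball xbar δ', Real.exp (-(b * c₂))) ≤
        ∫ x in Metric.ball xbar δ', exp (-(2 * b * U x)) := by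
      refine setIntegral_mono_on (integrableOn_const measure_ball_lt_top.ne)
        (hint_b b hb).integrableOn measurableSet_ball (fun x hx => ?_)
      refine Real.exp_le_exp.2 ?_
      have := hUsmall x hx
      nlinarith
    rw [setIntegral_const, smul_eq_mul] at h1
    calc Real.exp (-(b * c₂)) * V = V * Real.exp (-(b * c₂)) := mul_comm _ _
      _ ≤ ∫ x in Metric.ball xbar δ', exp (-(2 * b * U x)) := h1
      _ ≤ ∫ x, exp (-(2 * b * U x)) :=
        setIntegral_le_integral (hint_b b hb)
          (Filter.Eventually.of_forall fun x => (Real.exp_pos _).le)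
  -- eventually the tail term is small
  have htail : Tendsto (fun b : ℝ =>
      2 * M * K₀ * Real.exp (2 * β₀ * c₂) * Real.exp (-(b * c₂))) atTop (𝓝 0) := by
    have h1 : Tendsto (fun b : ℝ => -(b * c₂)) atTop atBot := by
      exact tendsto_neg_atTop_atBot.comp (tendsto_id.atTop_mul_const hc₂)
    have h2 : Tendsto (fun b : ℝ => Real.exp (-(b * c₂))) atTop (𝓝 0) :=
      Real.tendsto_exp_atBot.comp h1
    simpa using (tendsto_const_nhds (x := 2 * M * K₀ * Real.exp (2 * β₀ * c₂))).mul h2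
  have hev : ∀ᶠ b : ℝ in atTop,
      2 * M * K₀ * Real.exp (2 * β₀ * c₂) * Real.exp (-(b * c₂)) < ε / 4 * V :=
    htail.eventually_lt_const (by positivity)
  obtain ⟨b₁, hb₁⟩ := hev.exists_forall_of_atTop
  refine ⟨max b₁ β₀, fun b hb => ?_⟩
  have hbβ : β₀ ≤ b := le_trans (le_max_right _ _) hb
  have hbb₁ : b₁ ≤ b := le_trans (le_max_left _ _) hb
  set E : EuclideanSpace ℝ (Fin d) → ℝ := fun x => exp (-(2 * b * U x)) with hEdef
  have hEint : Integrable E volume := hint_b b hbβ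
  have hfEint : Integrable (fun x => f x * E x) volume := hint_fb b hbβ
  set D : ℝ := ∫ x, E x with hDdef
  have hDlb : Real.exp (-(b * c₂)) * V ≤ D := Dlb b hbβ
  have hD : 0 < D := lt_of_lt_of_le (by positivity) hDlb
  -- the key pointwise tail estimate
  have hptw : ∀ x, δ ≤ dist x xbar →
      |f x - f xbar| * E x ≤ 2 * M * (Real.exp (-(2 * (b - β₀) * c₂)) * exp (-(2 * β₀ * U x))) := by
    intro x hx
    have h1 : |f x - f xbar| ≤ 2 * M := by
      calc |f x - f xbar| ≤ |f x| + |f xbar| := abs_sub _ _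
        _ ≤ M + M := add_le_add (hM x) (hM xbar)
        _ = 2 * M := by ring
    have h2 : E x ≤ Real.exp (-(2 * (b - β₀) * c₂)) * exp (-(2 * β₀ * U x)) := by
      rw [hEdef, ← Real.exp_add]
      refine Real.exp_le_exp.2 ?_
      have hUx : c₂ ≤ U x := hc₂U x hx
      nlinarith [sub_nonneg.2 hbβ]
    calc |f x - f xbar| * E x ≤ (2 * M) * (Real.exp (-(2 * (b - β₀) * c₂)) * exp (-(2 * β₀ * U x))) :=
      mul_le_mul h1 h2 (by positivity) (by positivity)
      _ = _ := by ring
  -- numerator estimate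
  set T : ℝ := 2 * M * Real.exp (-(2 * (b - β₀) * c₂)) * K₀ with hTdef
  have hgint : Integrable (fun x => (f x - f xbar) * E x) volume := by
    have : Integrable (fun x => f xbar * E x) volume := hEint.const_mul _
    exact (hfEint.sub this).congr (Filter.Eventually.of_forall fun x => by simp only [Pi.sub_apply]; ring)
  have hnum : |(∫ x, f x * E x) - f xbar * D| ≤ ε / 4 * D + T := by
    have hrw : (∫ x, f x * E x) - f xbar * D = ∫ x, (f x - f xbar) * E x := by
      rw [hDdef, ← integral_const_mul, ← integral_sub hfEint (hEint.const_mul _)]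
      congr 1; funext x; ring
    rw [hrw]
    have habs : |∫ x, (f x - f xbar) * E x| ≤ ∫ x, |f x - f xbar| * E x := by
      have := norm_integral_le_integral_norm (μ := volume) (fun x => (f x - f xbar) * E x)
      simpa [Real.norm_eq_abs, abs_mul, abs_of_pos (Real.exp_pos _), hEdef] using this
    refine le_trans habs ?_
    have hgabs : Integrable (fun x => |f x - f xbar| * E x) volume := by
      have := hgint.abs
      simpa [abs_mul, abs_of_pos (Real.exp_pos _), hEdef] using this
    rw [← integral_add_compl (measurableSet_ball (x := xbar) (ε := δ)) hgabs]
    have hball : (∫ x in Metric.ball xbar δ, |f x - f xbar| * E x) ≤ ε / 4 * D := by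
      have h1 : (∫ x in Metric.ball xbar δ, |f x - f xbar| * E x) ≤
          ∫ x in Metric.ball xbar δ, ε / 4 * E x := by
        refine setIntegral_mono_on hgabs.integrableOn ((hEint.const_mul _).integrableOn)
          measurableSet_ball (fun x hx => ?_)
        refine mul_le_mul_of_nonneg_right ?_ (Real.exp_pos _).le
        exact le_of_lt (hfδ (Metric.mem_ball.1 hx))
      refine le_trans h1 ?_
      rw [integral_const_mul]
      refine mul_le_mul_of_nonneg_left ?_ (by positivity)
      exact setIntegral_le_integral hEint (Filter.Eventually.of_forall fun x => (Real.exp_pos _).le)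
    have hcompl : (∫ x in (Metric.ball xbar δ)ᶜ, |f x - f xbar| * E x) ≤ T := by
      have h1 : (∫ x in (Metric.ball xbar δ)ᶜ, |f x - f xbar| * E x) ≤
          ∫ x in (Metric.ball xbar δ)ᶜ,
            2 * M * (Real.exp (-(2 * (b - β₀) * c₂)) * exp (-(2 * β₀ * U x))) := by
        refine setIntegral_mono_on hgabs.integrableOn
          (((hintU.const_mul _).const_mul _).integrableOn) measurableSet_ball.compl
          (fun x hx => ?_)
        refine hptw x ?_
        simpa [Metric.mem_ball, not_lt] using hx
      refine le_trans h1 ?_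
      have h2 : ∫ x in (Metric.ball xbar δ)ᶜ,
          2 * M * (Real.exp (-(2 * (b - β₀) * c₂)) * exp (-(2 * β₀ * U x)))
          = 2 * M * Real.exp (-(2 * (b - β₀) * c₂)) *
            ∫ x in (Metric.ball xbar δ)ᶜ, exp (-(2 * β₀ * U x)) := by
        rw [← integral_const_mul]
        congr 1; funext x; ring
      rw [h2, hTdef]
      refine mul_le_mul_of_nonneg_left ?_ (by positivity)
      exact setIntegral_le_integral hintU (Filter.Eventually.of_forall fun x => (Real.exp_pos _).le)
    exact add_le_add hball hcompl
  -- tail term bound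
  have hT : T ≤ ε / 4 * (Real.exp (-(b * c₂)) * V) := by
    have h1 := hb₁ b hbb₁
    have hexp : Real.exp (-(2 * (b - β₀) * c₂)) =
        Real.exp (2 * β₀ * c₂) * Real.exp (-(b * c₂)) * Real.exp (-(b * c₂)) := by
      rw [← Real.exp_add, ← Real.exp_add]; ring_nf
    have h2 : T = (2 * M * K₀ * Real.exp (2 * β₀ * c₂) * Real.exp (-(b * c₂))) *
        Real.exp (-(b * c₂)) := by
      rw [hTdef, hexp]; ring
    rw [h2]
    calc (2 * M * K₀ * Real.exp (2 * β₀ * c₂) * Real.exp (-(b * c₂))) * Real.exp (-(b * c₂))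
        ≤ (ε / 4 * V) * Real.exp (-(b * c₂)) :=
          mul_le_mul_of_nonneg_right h1.le (Real.exp_pos _).le
      _ = ε / 4 * (Real.exp (-(b * c₂)) * V) := by ring
  have hTD : T ≤ ε / 4 * D := le_trans hT (mul_le_mul_of_nonneg_left hDlb (by positivity))
  -- conclude
  have hfinal : |(∫ x, f x * E x) / D - f xbar| ≤ ε / 2 := by
    have heq : (∫ x, f x * E x) / D - f xbar = ((∫ x, f x * E x) - f xbar * D) / D := by
      field_simp
    rw [heq, abs_div, abs_of_pos hD, div_le_iff₀ hD]
    calc |(∫ x, f x * E x) - f xbar * D| ≤ ε / 4 * D + T := hnum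
      _ ≤ ε / 4 * D + ε / 4 * D := add_le_add_right hTD _
      _ = ε / 2 * D := by ring
  rw [Real.dist_eq]
  exact lt_of_le_of_lt hfinal (by linarith)
end
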